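/- Let m ≥ 1 be an integer. Every word w over {a,b} can be factorized as w = w₁w₂w₃ with w₁ ∈ LL({b a^m, a}), w₂ ∈ LL({b a^m, b}) and |w₃|_a < m. Moreover, such a factorization can be chosen so that whenever w is the shuffle of x occurrences of b a^m together with some word w' (i.e., w ∈ (ba^m)^{⧢x} ⧢ w' for some word w'), one has x ≤ |w₁|_b + |w₂|_a / m. -/

import Mathlib

namespace ShuffleWqo

inductive AB : Type
  | a : AB
  | b : AB
  deriving DecidableEq

open AB

/-- The word `a^n`. -/
def wa (n : ℕ) : List AB := List.replicate n a

/-- The word `b^n`. -/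
def wb (n : ℕ) : List AB := List.replicate n b

/-- Concatenation power of a word: `npow u e = u^e`. -/
def npow (u : List AB) : ℕ → List AB
  | 0 => []
  | n + 1 => u ++ npow u n

/-- `Shuffle u v w` means `w` is a shuffle of `u` and `v`. -/
inductive Shuffle {α : Type*} : List α → List α → List α → Prop
  | nil : Shuffle [] [] []
  | left {x : α} {u v w : List α} : Shuffle u v w → Shuffle (x :: u) v (x :: w)
  | right {x : α} {u v w : List α} : Shuffle u v w → Shuffle u (x :: v) (x :: w)

/-- One derivation step: `w` is obtained from `v` by shuffling in a word of `I`. -/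
def Derives {α : Type*} (I : Set (List α)) (v w : List α) : Prop :=
  ∃ u ∈ I, Shuffle v u w

/-- The reflexive-transitive closure `⊢*_I`. -/
def DerivesStar {α : Type*} (I : Set (List α)) : List α → List α → Prop :=
  Relation.ReflTransGen (Derives I)

/-- The shuffle closure `LL(I)` of a set of words `I`. -/
def LL {α : Type*} (I : Set (List α)) : Set (List α) := { w | DerivesStar I [] w }

/-- `r` is a well quasi-order on the language `L`. -/
def IsWqoOn {α : Type*} (r : List α → List α → Prop) (L : Set (List α)) : Prop :=
  ∀ f : ℕ → List α, (∀ n, f n ∈ L) → ∃ i j, i < j ∧ r (f i) (f j)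

/-- `IsShuffleOfN u x w' w` : `w` is the shuffle of `x` occurrences of `u` and the word `w'`. -/
def IsShuffleOfN {α : Type*} (u : List α) : ℕ → List α → List α → Prop
  | 0, w', w => w = w'
  | x + 1, w', w => ∃ v : List α, IsShuffleOfN u x w' v ∧ Shuffle v u w


open List

lemma count_wa (n : ℕ) : (wa n).count a = n := by simp [wa]

lemma count_wa_b (n : ℕ) : (wa n).count b = 0 := by
  simp [wa, List.count_replicate]

lemma shuffle_nil_right : ∀ l : List AB, Shuffle l [] l
  | [] => .nil
  | _ :: t => .left (shuffle_nil_right t)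

lemma shuffle_nil_left : ∀ l : List AB, Shuffle [] l l
  | [] => .nil
  | _ :: t => .right (shuffle_nil_left t)

lemma shuffle_append_left {v u w : List AB} (p : List AB) (h : Shuffle v u w) :
    Shuffle (p ++ v) u (p ++ w) := by
  induction p with
  | nil => exact h
  | cons x p ih => exact .left ih

lemma shuffle_prepend : ∀ (u v : List AB), Shuffle v u (u ++ v)
  | [], v => shuffle_nil_right v
  | x :: u, v => .right (shuffle_prepend u v)

lemma LL_step {I : Set (List AB)} {w₀ u w : List AB} (h : w₀ ∈ LL I) (hu : u ∈ I)
    (hs : Shuffle w₀ u w) : w ∈ LL I :=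
  Relation.ReflTransGen.tail h ⟨u, hu, hs⟩

lemma count_shuffle {u v w : List AB} (h : Shuffle u v w) (x : AB) :
    w.count x = u.count x + v.count x := by
  induction h with
  | nil => simp
  | left _ ih => simp [List.count_cons, ih]; ring
  | right _ ih => simp [List.count_cons, ih]; ring

lemma splitShuffle {t s w : List AB} (h : Shuffle t s w) :
    ∀ u v : List AB, w = u ++ v →
      ∃ t₁ t₂ s₁ s₂, t = t₁ ++ t₂ ∧ s = s₁ ++ s₂ ∧ Shuffle t₁ s₁ u ∧ Shuffle t₂ s₂ v := by
  induction h with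
  | nil =>
    rintro u v huv
    obtain ⟨hu, hv⟩ := List.append_eq_nil_iff.mp huv.symm
    exact ⟨[], [], [], [], by simp, by simp, hu ▸ .nil, hv ▸ .nil⟩
  | @left x t s w h ih =>
    rintro u v huv
    cases u with
    | nil =>
      refine ⟨[], x :: t, [], s, rfl, rfl, .nil, ?_⟩
      simp only [List.nil_append] at huv
      exact huv ▸ .left h
    | cons y u =>
      simp only [List.cons_append, List.cons.injEq] at huv
      obtain ⟨rfl, huv⟩ := huv
      obtain ⟨t₁, t₂, s₁, s₂, h1, h2, h3, h4⟩ := ih u v huv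
      exact ⟨x :: t₁, t₂, s₁, s₂, by simp [h1], h2, .left h3, h4⟩
  | @right x t s w h ih =>
    rintro u v huv
    cases u with
    | nil =>
      refine ⟨[], t, [], x :: s, rfl, rfl, .nil, ?_⟩
      simp only [List.nil_append] at huv
      exact huv ▸ .right h
    | cons y u =>
      simp only [List.cons_append, List.cons.injEq] at huv
      obtain ⟨rfl, huv⟩ := huv
      obtain ⟨t₁, t₂, s₁, s₂, h1, h2, h3, h4⟩ := ih u v huv
      exact ⟨t₁, t₂, x :: s₁, s₂, h1, by simp [h2], .right h3, h4⟩

lemma keyBound {m : ℕ} : ∀ (x : ℕ) (w' w u v : List AB),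
    IsShuffleOfN ([b] ++ wa m) x w' w → w = u ++ v →
    ∃ x₁ x₂, x = x₁ + x₂ ∧ x₁ ≤ u.count b ∧ x₂ * m ≤ v.count a := by
  intro x
  induction x with
  | zero => intro w' w u v _ _; exact ⟨0, 0, rfl, by simp, by simp⟩
  | succ x ih =>
    rintro w' w u v ⟨v', hN, hsh⟩ rfl
    obtain ⟨t₁, t₂, s₁, s₂, rfl, hs, h3, h4⟩ := splitShuffle hsh u v rfl
    obtain ⟨x₁, x₂, rfl, hx₁, hx₂⟩ := ih w' (t₁ ++ t₂) t₁ t₂ hN rfl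
    have hcu : u.count b = t₁.count b + s₁.count b := count_shuffle h3 b
    have hcv : v.count a = t₂.count a + s₂.count a := count_shuffle h4 a
    cases s₁ with
    | nil =>
      simp only [List.nil_append] at hs
      have hs₂ : s₂.count a = m := by
        rw [← hs]; simp [count_wa]
      have hc0 : ([] : List AB).count b = 0 := by simp
      have hmul : (x₂ + 1) * m = x₂ * m + m := by ring
      exact ⟨x₁, x₂ + 1, by ring, by omega, by omega⟩
    | cons c s₁ =>
      simp only [List.cons_append, List.cons.injEq] at hs
      obtain ⟨rfl, hs⟩ := hs
      have hbs : 1 ≤ (b :: s₁).count b := by simp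
      refine ⟨x₁ + 1, x₂, by ring, by omega, by omega⟩

open AB List

lemma mem_LL_of_no_b {I : Set (List AB)} (haI : [a] ∈ I) :
    ∀ l : List AB, l.count b = 0 → l ∈ LL I := by
  intro l
  induction l with
  | nil => intro _; exact Relation.ReflTransGen.refl
  | cons x t ih =>
    intro h
    cases x with
    | a =>
      have ht : t.count b = 0 := by simpa using h
      exact LL_step (ih ht) haI (.right (shuffle_nil_right t))
    | b => simp [List.count_cons] at h

lemma mem_LL_of_no_a {I : Set (List AB)} (hbI : [b] ∈ I) :
    ∀ l : List AB, l.count a = 0 → l ∈ LL I := by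
  intro l
  induction l with
  | nil => intro _; exact Relation.ReflTransGen.refl
  | cons x t ih =>
    intro h
    cases x with
    | b =>
      have ht : t.count a = 0 := by simpa using h
      exact LL_step (ih ht) hbI (.right (shuffle_nil_right t))
    | a => simp [List.count_cons] at h

lemma exists_last_b : ∀ l : List AB, 1 ≤ l.count b →
    ∃ p s, l = p ++ b :: s ∧ s.count b = 0 := by
  intro l
  induction l with
  | nil => simp
  | cons x t ih =>
    intro h
    by_cases ht : t.count b = 0
    · cases x with
      | a => simp [List.count_cons, ht] at h
      | b => exact ⟨[], t, rfl, ht⟩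
    · obtain ⟨p, s, rfl, hs⟩ := ih (by omega)
      exact ⟨x :: p, s, rfl, hs⟩

lemma eq_wa_of_no_b : ∀ s : List AB, s.count b = 0 → s = wa s.length := by
  intro s
  induction s with
  | nil => intro _; simp [wa]
  | cons x t ih =>
    intro h
    cases x with
    | a =>
      have := ih (by simpa using h)
      simp only [List.length_cons, wa, List.replicate_succ]
      exact congrArg (a :: ·) this
    | b => simp [List.count_cons] at h

lemma memA (m : ℕ) : ∀ (n : ℕ) (l : List AB), l.count b = n →
    (∀ p s : List AB, l = p ++ s → m * s.count b ≤ s.count a) →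
    l ∈ LL {[b] ++ wa m, [a]} := by
  intro n
  induction n with
  | zero => intro l hl _; exact mem_LL_of_no_b (by simp) l hl
  | succ n ih =>
    intro l hl hcond
    obtain ⟨p, s, rfl, hs⟩ := exists_last_b l (by omega)
    set k := s.length with hk
    have hsk : s = wa k := eq_wa_of_no_b s hs
    have hsa : s.count a = k := by rw [hsk, count_wa]
    have hmk : m ≤ k := by
      have := hcond p (b :: s) rfl
      simp only [List.count_cons, hs, hsa] at this
      simpa using this
    set v := p ++ wa (k - m) with hv
    have hvb : v.count b = n := by
      simp only [List.count_append, List.count_cons, hs] at hl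
      simp only [hv, List.count_append, count_wa_b]
      simp at hl ⊢
      omega
    have hvcond : ∀ p₁ s₁ : List AB, v = p₁ ++ s₁ → m * s₁.count b ≤ s₁.count a := by
      intro p₁ s₁ hsplit
      rcases List.append_eq_append_iff.mp hsplit with ⟨c, hc1, hc2⟩ | ⟨a', ha1, ha2⟩
      · -- p₁ = p ++ c, wa (k-m) = c ++ s₁ : s₁ suffix of wa
        have hcb : (wa (k - m)).count b = c.count b + s₁.count b := by
          rw [hc2]; simp [List.count_append]
        rw [count_wa_b] at hcb
        have : s₁.count b = 0 := by omega
        simp [this]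
      · -- p = p₁ ++ a', s₁ = a' ++ wa (k - m)
        have horig := hcond p₁ (a' ++ b :: s) (by rw [ha1]; simp)
        have h1 : s₁.count b = a'.count b := by
          simp [ha2, List.count_append, count_wa_b]
        have h2 : s₁.count a = a'.count a + (k - m) := by
          simp [ha2, List.count_append, count_wa]
        have h3 : (a' ++ b :: s).count b = a'.count b + 1 := by
          simp [List.count_append, List.count_cons, hs]
        have h4 : (a' ++ b :: s).count a = a'.count a + k := by
          simp [List.count_append, List.count_cons, hsa]
        rw [h3, h4, Nat.mul_add, Nat.mul_one] at horig
        rw [h1, h2]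
        generalize m * a'.count b = Z at horig ⊢
        omega
    have hshuf : Shuffle v ([b] ++ wa m) (p ++ b :: s) := by
      rw [hsk, hv]
      have hwa : wa k = wa m ++ wa (k - m) := by
        rw [wa, wa, wa, ← List.replicate_add]
        congr 1
        omega
      have inner : Shuffle (wa (k - m)) (b :: wa m) (b :: wa k) := by
        rw [hwa]
        exact .right (shuffle_prepend (wa m) (wa (k - m)))
      exact shuffle_append_left p inner
    exact LL_step (ih v hvb hvcond) (Set.mem_insert _ _) hshuf

open AB List

def dropAs : ℕ → List AB → List AB
  | 0, l => l
  | _ + 1, [] => []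
  | n + 1, a :: l => dropAs n l
  | n + 1, b :: l => b :: dropAs (n + 1) l

lemma dropAs_nil (n : ℕ) : dropAs n [] = [] := by cases n <;> rfl

lemma shuffle_dropAs : ∀ (n : ℕ) (t : List AB), n ≤ t.count a →
    Shuffle (dropAs n t) (wa n) t := by
  intro n t
  induction t generalizing n with
  | nil =>
    intro h
    have : n = 0 := by simpa using h
    subst this
    exact .nil
  | cons x t ih =>
    intro h
    cases n with
    | zero => exact shuffle_nil_right _
    | succ n =>
      cases x with
      | a =>
        have : Shuffle (dropAs n t) (a :: wa n) (a :: t) := by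
          refine .right (ih n ?_)
          simp [List.count_cons] at h
          omega
        simpa [dropAs, wa, List.replicate_succ] using this
      | b =>
        have hc : n + 1 ≤ t.count a := by simpa [List.count_cons] using h
        exact .left (ih (n + 1) hc)

lemma count_a_dropAs : ∀ (n : ℕ) (t : List AB), n ≤ t.count a →
    (dropAs n t).count a = t.count a - n := by
  intro n t
  induction t generalizing n with
  | nil => intro h; simp [dropAs_nil]
  | cons x t ih =>
    intro h
    cases n with
    | zero => simp [dropAs]
    | succ n =>
      cases x with
      | a =>
        have h' : n ≤ t.count a := by simp [List.count_cons] at h; omega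
        have := ih n h'
        simp [dropAs, List.count_cons, this]
      | b =>
        have h' : n + 1 ≤ t.count a := by simpa [List.count_cons] using h
        have := ih (n + 1) h'
        simp [dropAs, List.count_cons, this]

lemma length_dropAs_le : ∀ (n : ℕ) (t : List AB), (dropAs n t).length ≤ t.length := by
  intro n t
  induction t generalizing n with
  | nil => simp [dropAs_nil]
  | cons x t ih =>
    cases n with
    | zero => simp [dropAs]
    | succ n =>
      cases x with
      | a => simpa [dropAs] using Nat.le_succ_of_le (ih n)
      | b => simpa [dropAs] using ih (n + 1)

lemma dropAs_prefix : ∀ (t : List AB) (n : ℕ) (p' s' : List AB), dropAs n t = p' ++ s' →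
    ∃ pt st, t = pt ++ st ∧ pt.count b = p'.count b ∧
      p'.count a + min n (pt.count a) = pt.count a := by
  intro t
  induction t with
  | nil =>
    intro n p' s' h
    rw [dropAs_nil] at h
    obtain ⟨h1, _⟩ := List.append_eq_nil_iff.mp h.symm
    exact ⟨[], [], by simp, by simp [h1], by simp [h1]⟩
  | cons x t ih =>
    intro n p' s' h
    cases n with
    | zero =>
      exact ⟨p', s', h, rfl, by simp⟩
    | succ n =>
      cases x with
      | a =>
        obtain ⟨pt, st, h1, h2, h3⟩ := ih n p' s' h
        refine ⟨a :: pt, st, by simp [h1], by simpa [List.count_cons] using h2, ?_⟩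
        simp only [List.count_cons]
        simp
        omega
      | b =>
        cases p' with
        | nil =>
          exact ⟨[], b :: t, by simp, by simp, by simp⟩
        | cons y p'' =>
          have h' : b = y ∧ dropAs (n + 1) t = p'' ++ s' := by
            simpa [dropAs] using h
          obtain ⟨rfl, h'⟩ := h'
          obtain ⟨pt, st, h1, h2, h3⟩ := ih (n + 1) p'' s' h'
          refine ⟨b :: pt, st, by simp [h1], ?_, ?_⟩
          · simp [List.count_cons, h2]
          · simpa [List.count_cons] using h3

lemma memB (m : ℕ) (hm : 1 ≤ m) : ∀ (N : ℕ) (l : List AB), l.length ≤ N →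
    (∀ p s : List AB, l = p ++ s → p.count a ≤ m * p.count b) →
    m ∣ l.count a →
    l ∈ LL {[b] ++ wa m, [b]} := by
  intro N
  induction N with
  | zero =>
    intro l hlen _ _
    have : l = [] := List.length_eq_zero_iff.mp (by omega)
    subst this
    exact Relation.ReflTransGen.refl
  | succ N ih =>
    intro l hlen hcond hdvd
    by_cases hca : l.count a = 0
    · exact mem_LL_of_no_a (by simp) l hca
    · have hml : m ≤ l.count a := Nat.le_of_dvd (by omega) hdvd
      cases l with
      | nil => simp at hca
      | cons x t =>
        cases x with
        | a =>
          have := hcond [a] t rfl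
          simp at this
        | b =>
          have hta : m ≤ t.count a := by
            simpa [List.count_cons] using hml
          set v := dropAs m t with hv
          have hsh : Shuffle v ([b] ++ wa m) (b :: t) :=
            .right (shuffle_dropAs m t hta)
          have hvlen : v.length ≤ N := by
            rw [hv]
            have := length_dropAs_le m t
            simp at hlen
            omega
          have hvca : v.count a = t.count a - m := count_a_dropAs m t hta
          have hvdvd : m ∣ v.count a := by
            rw [hvca]
            have : t.count a = (b :: t).count a := by simp [List.count_cons]
            rw [this]
            exact (Nat.dvd_sub hdvd (dvd_refl m))
          have hvcond : ∀ p s : List AB, v = p ++ s → p.count a ≤ m * p.count b := by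
            intro p' s' hsplit
            obtain ⟨pt, st, h1, h2, h3⟩ := dropAs_prefix t m p' s' hsplit
            have horig := hcond (b :: pt) st (by simp [h1])
            simp only [List.count_cons] at horig
            simp at horig
            rw [Nat.mul_add, Nat.mul_one] at horig
            rw [← h2]
            generalize m * pt.count b = Z at horig ⊢
            omega
          exact LL_step (ih v hvlen hvcond hvdvd) (Set.mem_insert _ _) hsh

open AB List

lemma exists_split_count : ∀ (l : List AB) (n : ℕ), n ≤ l.count a →
    ∃ p s, l = p ++ s ∧ p.count a = n := by
  intro l
  induction l with
  | nil =>
    intro n h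
    have : n = 0 := by simpa using h
    exact ⟨[], [], rfl, by simp [this]⟩
  | cons x t ih =>
    intro n h
    cases n with
    | zero => exact ⟨[], x :: t, rfl, by simp⟩
    | succ n =>
      cases x with
      | a =>
        obtain ⟨p, s, rfl, hp⟩ := ih n (by simp [List.count_cons] at h; omega)
        exact ⟨a :: p, s, rfl, by simp [List.count_cons, hp]⟩
      | b =>
        obtain ⟨p, s, rfl, hp⟩ := ih (n + 1) (by simpa [List.count_cons] using h)
        exact ⟨b :: p, s, rfl, by simp [List.count_cons, hp]⟩

theorem stmt14_aux (m : ℕ) (hm : 1 ≤ m) (w : List AB) :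
    ∃ w₁ w₂ w₃ : List AB, w = w₁ ++ w₂ ++ w₃ ∧
      w₁ ∈ LL {[b] ++ wa m, [a]} ∧ w₂ ∈ LL {[b] ++ wa m, [b]} ∧ w₃.count a < m ∧
      ∀ (x : ℕ) (w' : List AB), IsShuffleOfN ([b] ++ wa m) x w' w →
        (x : ℚ) ≤ (w₁.count b : ℚ) + (w₂.count a : ℚ) / (m : ℚ) := by
  set F : ℕ → ℕ := fun n => (w.take n).count a + m * ((w.drop n).count b) with hF
  obtain ⟨n', hn'mem, hn'max⟩ :=
    Finset.exists_max_image (Finset.range (w.length + 1)) F ⟨0, by simp⟩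
  set w₁ := w.take n' with hw₁
  set r := w.drop n' with hr
  have hwr : w = w₁ ++ r := (List.take_append_drop n' w).symm
  -- maximality over arbitrary splits
  have hmax : ∀ u v : List AB, w = u ++ v →
      u.count a + m * v.count b ≤ w₁.count a + m * r.count b := by
    intro u v huv
    have hlen : u.length ≤ w.length := by rw [huv]; simp
    have := hn'max u.length (Finset.mem_range.mpr (by omega))
    have ht : w.take u.length = u := by rw [huv]; exact List.take_left
    have hd : w.drop u.length = v := by rw [huv]; exact List.drop_left
    rw [hF] at this
    simpa [ht, hd] using this
  -- suffix condition for w₁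
  have hcond₁ : ∀ p s : List AB, w₁ = p ++ s → m * s.count b ≤ s.count a := by
    intro p s hps
    have hw' : w = p ++ (s ++ r) := by rw [hwr, hps]; simp
    have h := hmax p (s ++ r) hw'
    have h1 : w₁.count a = p.count a + s.count a := by rw [hps]; simp [List.count_append]
    have h2 : (s ++ r).count b = s.count b + r.count b := by simp [List.count_append]
    rw [h1, h2, Nat.mul_add] at h
    generalize m * s.count b = Z at h ⊢
    omega
  -- prefix condition for prefixes of r
  have hcond₂ : ∀ q q' : List AB, r = q ++ q' → q.count a ≤ m * q.count b := by
    intro q q' hqq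
    have hw' : w = (w₁ ++ q) ++ q' := by rw [hwr, hqq]; simp
    have h := hmax (w₁ ++ q) q' hw'
    have h1 : (w₁ ++ q).count a = w₁.count a + q.count a := by simp [List.count_append]
    have h2 : r.count b = q.count b + q'.count b := by rw [hqq]; simp [List.count_append]
    rw [h1, h2, Nat.mul_add] at h
    generalize m * q.count b = Z at h ⊢
    omega
  -- split r
  set q := r.count a / m with hq
  have hqle : m * q ≤ r.count a := by
    rw [hq, Nat.mul_comm]
    exact Nat.div_mul_le_self _ _
  obtain ⟨w₂, w₃, hrw, hw₂a⟩ := exists_split_count r (m * q) hqle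
  have hw₃a : w₃.count a = r.count a - m * q := by
    have : r.count a = w₂.count a + w₃.count a := by rw [hrw]; simp [List.count_append]
    omega
  have hw₃lt : w₃.count a < m := by
    rw [hw₃a, hq]
    have h3 : r.count a % m < m := Nat.mod_lt _ (by omega)
    have h4 := Nat.div_add_mod (r.count a) m
    have h5 : m * (r.count a / m) = r.count a / m * m := Nat.mul_comm _ _
    omega
  refine ⟨w₁, w₂, w₃, by rw [hwr, hrw, List.append_assoc], ?_, ?_, hw₃lt, ?_⟩
  · exact memA m (w₁.count b) w₁ rfl hcond₁
  · refine memB m hm w₂.length w₂ le_rfl ?_ (by rw [hw₂a]; exact Dvd.intro q rfl)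
    intro p s hps
    exact hcond₂ p (s ++ w₃) (by rw [hrw, hps]; simp)
  · intro x w' hx
    obtain ⟨x₁, x₂, hxsum, hx₁, hx₂⟩ := keyBound x w' w w₁ (w₂ ++ w₃) hx
      (by rw [hwr, hrw])
    have hva : (w₂ ++ w₃).count a = m * q + w₃.count a := by
      simp [List.count_append, hw₂a]
    have hx₂' : x₂ ≤ q := by
      have h1 : x₂ * m < (q + 1) * m := by
        have : (q + 1) * m = m * q + m := by ring
        omega
      exact Nat.lt_succ_iff.mp (Nat.lt_of_mul_lt_mul_right h1)
    have hxq : (x : ℚ) ≤ (w₁.count b : ℚ) + (q : ℚ) := by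
      have : x ≤ w₁.count b + q := by omega
      exact_mod_cast this
    have hdiv : (w₂.count a : ℚ) / (m : ℚ) = (q : ℚ) := by
      rw [hw₂a]
      push_cast
      field_simp
    rw [hdiv]
    exact hxq



theorem stmt14 (m : ℕ) (hm : 1 ≤ m) (w : List AB) :
    ∃ w₁ w₂ w₃ : List AB, w = w₁ ++ w₂ ++ w₃ ∧
      w₁ ∈ LL {[b] ++ wa m, [a]} ∧ w₂ ∈ LL {[b] ++ wa m, [b]} ∧ w₃.count a < m ∧
      ∀ (x : ℕ) (w' : List AB), IsShuffleOfN ([b] ++ wa m) x w' w →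
        (x : ℚ) ≤ (w₁.count b : ℚ) + (w₂.count a : ℚ) / (m : ℚ) := by
  exact stmt14_aux m hm w

end ShuffleWqo
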